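/- Let n ≥ 2, α ∈ (0, 1], T > 0, and let ĉ, c̄ be constants with 0 < ĉ < 1 and c̄ > ĉ. Then there exists R₀ > 0 depending only on α, n, T (and ĉ, c̄) such that for every R > R₀, the function Ψ̄(x,t) = R² (4π(T−t))^{−(n/2)c̄} e^{ĉ n |x|²/(4(T−t))} is a supersolution of the fast diffusion equation on ℝⁿ × [0, T): for all x ∈ ℝⁿ and 0 ≤ t < T, ∂_t Ψ̄ − Σ_i ∂_{x_i}( n^{α−1} Ψ̄^{−α} ∂_{x_i} Ψ̄ ) ≥ 0. -/

import Mathlib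

set_option maxHeartbeats 1000000

/-- Partial derivative in the `i`-th coordinate direction. -/
noncomputable def pd {n : ℕ} (i : Fin n) (f : EuclideanSpace ℝ (Fin n) → ℝ)
    (x : EuclideanSpace ℝ (Fin n)) : ℝ :=
  fderiv ℝ f x (EuclideanSpace.single i (1 : ℝ))

lemma hasFDerivAt_gauss {n : ℕ} (C B : ℝ) (y : EuclideanSpace ℝ (Fin n)) :
    HasFDerivAt (fun z : EuclideanSpace ℝ (Fin n) => C * Real.exp (B * ‖z‖ ^ 2))
      ((C * Real.exp (B * ‖y‖ ^ 2)) • (B • (2 • (innerSL ℝ y)))) y := by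
  have h0 : HasFDerivAt (fun z : EuclideanSpace ℝ (Fin n) => ‖z‖ ^ 2)
      (2 • innerSL ℝ y) y := (hasStrictFDerivAt_norm_sq y).hasFDerivAt
  have h1 := ((h0.const_mul B).exp).const_mul C
  rw [← smul_smul]
  exact h1

lemma pd_gauss {n : ℕ} (i : Fin n) (C B : ℝ) (x : EuclideanSpace ℝ (Fin n)) :
    pd i (fun z => C * Real.exp (B * ‖z‖ ^ 2)) x
      = C * Real.exp (B * ‖x‖ ^ 2) * (B * (2 * x i)) := by
  rw [pd, (hasFDerivAt_gauss C B x).fderiv]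
  simp [EuclideanSpace.inner_single_right, real_inner_comm]

lemma pd_xexp {n : ℕ} (i : Fin n) (D B : ℝ) (x : EuclideanSpace ℝ (Fin n)) :
    pd i (fun z => D * (z i * Real.exp (B * ‖z‖ ^ 2))) x
      = D * (Real.exp (B * ‖x‖ ^ 2) * (1 + x i * (B * (2 * x i)))) := by
  have h0 : HasFDerivAt (fun z : EuclideanSpace ℝ (Fin n) => ‖z‖ ^ 2)
      (2 • innerSL ℝ x) x := (hasStrictFDerivAt_norm_sq x).hasFDerivAt
  have hp : HasFDerivAt (fun z : EuclideanSpace ℝ (Fin n) => z i)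
      ((EuclideanSpace.proj i : EuclideanSpace ℝ (Fin n) →L[ℝ] ℝ)) x :=
    (EuclideanSpace.proj i : EuclideanSpace ℝ (Fin n) →L[ℝ] ℝ).hasFDerivAt
  have h1 := (hp.mul ((h0.const_mul B).exp)).const_mul D
  rw [pd, (show HasFDerivAt (fun z : EuclideanSpace ℝ (Fin n) => D * (z i * Real.exp (B * ‖z‖ ^ 2))) _ x from h1).fderiv]
  simp [EuclideanSpace.inner_single_right, real_inner_comm, EuclideanSpace.proj]
  ring

/-- For `n ≥ 2`, `α ∈ (0,1]`, `T > 0`, `0 < ĉ < 1 < ∞`, `c̄ > ĉ`: there is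
`R₀ > 0` (depending only on `α, n, T, ĉ, c̄`) such that for every `R > R₀`
the growing Gaussian `Ψ̄(x,t) = R²(4π(T−t))^{−(n/2)c̄} e^{ĉn|x|²/(4(T−t))}` is
a supersolution of the fast diffusion equation on `ℝⁿ × [0,T)`:
`∂_tΨ̄ − ∑_i ∂_{x_i}(n^{α−1}Ψ̄^{−α}∂_{x_i}Ψ̄) ≥ 0`. -/
theorem gaussian_fde_supersolution (n : ℕ) (hn : 2 ≤ n) (α T ch cb : ℝ)
    (hα : 0 < α ∧ α ≤ 1) (hT : 0 < T) (h0 : 0 < ch) (h1 : ch < 1)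
    (h2 : ch < cb) :
    ∃ R₀ > (0 : ℝ), ∀ R : ℝ, R₀ < R →
      ∀ Ψ : EuclideanSpace ℝ (Fin n) → ℝ → ℝ,
      (∀ x s, Ψ x s = R ^ 2 * (4 * Real.pi * (T - s)) ^ (-((n : ℝ) / 2) * cb) *
        Real.exp ((ch * n * ‖x‖ ^ 2) / (4 * (T - s)))) →
      ∀ (x : EuclideanSpace ℝ (Fin n)) (t : ℝ), 0 ≤ t → t < T →
        0 ≤ deriv (Ψ x) t -
          ∑ i, pd i (fun y =>
            (n : ℝ) ^ (α - 1) * (Ψ y t) ^ (-α) * pd i (fun z => Ψ z t) y) x := by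
  obtain ⟨hα0, hα1⟩ := hα
  have hπ := Real.pi_pos
  have hnpos : (0:ℝ) < n := by positivity
  have hn2 : (2:ℝ) ≤ n := by exact_mod_cast hn
  set M : ℝ := (n : ℝ) ^ ((1 + α) / α) with hMdef
  have hM1 : (1:ℝ) ≤ M := Real.one_le_rpow (by exact_mod_cast Nat.one_le_of_lt hn) (by positivity)
  have hQ : 0 ≤ M * (4 * Real.pi * T) ^ (((n:ℝ) / 2) * cb) := by positivity
  refine ⟨Real.sqrt (M * (4 * Real.pi * T) ^ (((n:ℝ) / 2) * cb)) + 1, by positivity,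
    fun R hR Ψ hΨ x t ht0 htT => ?_⟩
  have hRpos : 0 < R := lt_of_lt_of_le (by positivity) hR.le
  have hw : (0:ℝ) < T - t := by linarith
  set τ : ℝ := T - t with hτdef
  have hτ : 0 < τ := hw
  have hw' : (0:ℝ) < T - t := by rw [← hτdef]; exact hτ
  have hτT : τ ≤ T := by rw [hτdef]; linarith
  set e : ℝ := -((n : ℝ) / 2) * cb with hedef
  have hcb : 0 < cb := lt_trans h0 h2
  have he : e ≤ 0 := by rw [hedef]; nlinarith
  set s0 : ℝ := ‖x‖ ^ 2 with hs0def
  have hs0 : 0 ≤ s0 := by positivity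
  set A : ℝ := R ^ 2 * (4 * Real.pi * τ) ^ e with hAdef
  have hApos : 0 < A := by positivity
  set B : ℝ := ch * n / (4 * τ) with hBdef
  have hB : 0 < B := by positivity
  set B1 : ℝ := (1 - α) * B with hB1def
  have hB1 : 0 ≤ B1 := by rw [hB1def]; nlinarith
  set D : ℝ := (n : ℝ) ^ (α - 1) * A ^ (1 - α) * (2 * B) with hDdef
  have hD : 0 < D := by positivity
  clear_value M τ e s0 A B B1 D
  have h4πτ : (0:ℝ) < 4 * Real.pi * τ := mul_pos (by positivity) hτ
  have h4πw : (0:ℝ) < 4 * Real.pi * (T - t) := mul_pos (by positivity) hw'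
  -- key lower bound on A
  have hMA : M ≤ A := by
    have h42 : (4 * Real.pi * T) ^ e ≤ (4 * Real.pi * τ) ^ e :=
      Real.rpow_le_rpow_of_nonpos h4πτ
        (mul_le_mul_of_nonneg_left hτT (by positivity)) he
    have hRQ : M * (4 * Real.pi * T) ^ (((n:ℝ) / 2) * cb) ≤ R ^ 2 := by
      have := Real.sq_sqrt hQ
      nlinarith [Real.sqrt_nonneg (M * (4 * Real.pi * T) ^ (((n:ℝ) / 2) * cb))]
    have hcancel : (4 * Real.pi * T) ^ (((n:ℝ) / 2) * cb) * (4 * Real.pi * T) ^ e = 1 := by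
      rw [← Real.rpow_add (by positivity)]
      rw [hedef]
      norm_num
    calc M = M * ((4 * Real.pi * T) ^ (((n:ℝ) / 2) * cb) * (4 * Real.pi * T) ^ e) := by
            rw [hcancel, mul_one]
      _ ≤ R ^ 2 * (4 * Real.pi * T) ^ e := by
            rw [← mul_assoc]
            exact mul_le_mul_of_nonneg_right hRQ (by positivity)
      _ ≤ A := by
            rw [hAdef]
            exact mul_le_mul_of_nonneg_left h42 (by positivity)
  have hAα : (n : ℝ) ^ (1 + α) ≤ A ^ α := by
    have hMα : M ^ α ≤ A ^ α := Real.rpow_le_rpow (by linarith) hMA hα0.le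
    have : M ^ α = (n : ℝ) ^ (1 + α) := by
      rw [hMdef, ← Real.rpow_mul hnpos.le, div_mul_cancel₀ _ hα0.ne']
    linarith
  -- time derivative
  have hDt : deriv (Ψ x) t = A * Real.exp (B * s0) * (((n:ℝ) / 2 * cb + B * s0) / τ) := by
    have hfun : Ψ x = fun s => R ^ 2 * (4 * Real.pi * (T - s)) ^ e *
        Real.exp ((ch * n * ‖x‖ ^ 2) / (4 * (T - s))) := funext fun s => hΨ x s
    have hg1 : HasDerivAt (fun u : ℝ => 4 * Real.pi * (T - u)) (4 * Real.pi * (-1)) t :=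
      ((hasDerivAt_id t).const_sub T).const_mul (4 * Real.pi)
    have hg2 : HasDerivAt (fun u : ℝ => (4 * Real.pi * (T - u)) ^ e)
        ((4 * Real.pi * (-1)) * e * (4 * Real.pi * (T - t)) ^ (e - 1)) t :=
      hg1.rpow_const (p := e) (Or.inl (ne_of_gt h4πw))
    have hg3 : HasDerivAt (fun u : ℝ => 4 * (T - u)) (4 * (-1)) t :=
      ((hasDerivAt_id t).const_sub T).const_mul 4
    have hg4 : HasDerivAt (fun u : ℝ => (ch * n * ‖x‖ ^ 2) / (4 * (T - u)))
        ((0 * (4 * (T - t)) - (ch * n * ‖x‖ ^ 2) * (4 * (-1))) / (4 * (T - t)) ^ 2) t :=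
      (hasDerivAt_const t (ch * (n:ℝ) * ‖x‖ ^ 2)).div hg3 (by nlinarith)
    have h5 := ((hg2.const_mul (R ^ 2)).mul hg4.exp)
    rw [hfun, (show HasDerivAt (fun s => R ^ 2 * (4 * Real.pi * (T - s)) ^ e *
        Real.exp ((ch * n * ‖x‖ ^ 2) / (4 * (T - s)))) _ t from h5).deriv, hAdef, hBdef, hs0def, hτdef]
    rw [show ch * (n:ℝ) / (4 * (T - t)) * ‖x‖ ^ 2
        = (ch * (n:ℝ) * ‖x‖ ^ 2) / (4 * (T - t)) from by ring]
    rw [Real.rpow_sub_one (ne_of_gt h4πw)]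
    rw [hedef]
    generalize (4 * Real.pi * (T - t)) ^ (-((n:ℝ) / 2) * cb) = X
    generalize Real.exp (ch * (n:ℝ) * ‖x‖ ^ 2 / (4 * (T - t))) = Ex
    field_simp
    ring
  -- spatial part
  have hfun2 : (fun z : EuclideanSpace ℝ (Fin n) => Ψ z t)
      = fun z => A * Real.exp (B * ‖z‖ ^ 2) := by
    funext z
    rw [hΨ z t, hAdef, hBdef, hτdef]
    rw [show ch * (n:ℝ) / (4 * (T - t)) * ‖z‖ ^ 2
        = (ch * (n:ℝ) * ‖z‖ ^ 2) / (4 * (T - t)) from by ring]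
  have hsplit : ∀ u : ℝ, (A * Real.exp u) ^ (-α) = A ^ (-α) * Real.exp (-α * u) :=
    fun u => by
      rw [Real.mul_rpow hApos.le (Real.exp_pos u).le, ← Real.exp_mul, mul_comm u (-α)]
  have hA1 : A ^ (-α) * A = A ^ (1 - α) := by
    rw [show (1 - α) = -α + 1 by ring, Real.rpow_add hApos, Real.rpow_one]
  have hflux : ∀ i : Fin n,
      (fun y => (n : ℝ) ^ (α - 1) * (Ψ y t) ^ (-α) * pd i (fun z => Ψ z t) y)
      = fun y => D * (y i * Real.exp (B1 * ‖y‖ ^ 2)) := by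
    intro i
    funext y
    have hpdΨ : pd i (fun z => Ψ z t) y = A * Real.exp (B * ‖y‖ ^ 2) * (B * (2 * y i)) := by
      rw [hfun2]; exact pd_gauss i A B y
    have hy : Ψ y t = A * Real.exp (B * ‖y‖ ^ 2) := by
      simpa using congrFun hfun2 y
    rw [hpdΨ, hy, hsplit, hDdef, ← hA1]
    rw [show -α * (B * ‖y‖ ^ 2) = (-α * B) * ‖y‖ ^ 2 by ring]
    have hee : Real.exp (-α * B * ‖y‖ ^ 2) * Real.exp (B * ‖y‖ ^ 2)
        = Real.exp (B1 * ‖y‖ ^ 2) := by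
      rw [← Real.exp_add]; congr 1; rw [hB1def]; ring
    calc (n : ℝ) ^ (α - 1) * (A ^ (-α) * Real.exp (-α * B * ‖y‖ ^ 2)) *
          (A * Real.exp (B * ‖y‖ ^ 2) * (B * (2 * y i)))
        = (n : ℝ) ^ (α - 1) * (A ^ (-α) * A) * (2 * B) *
          (y i * (Real.exp (-α * B * ‖y‖ ^ 2) * Real.exp (B * ‖y‖ ^ 2))) := by ring
      _ = (n : ℝ) ^ (α - 1) * (A ^ (-α) * A) * (2 * B) * (y i * Real.exp (B1 * ‖y‖ ^ 2)) := by
          rw [hee]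
  have hnormsum : ∑ i, (x i) ^ 2 = s0 := by
    rw [hs0def, EuclideanSpace.norm_eq, Real.sq_sqrt (by positivity)]
    simp [sq_abs]
  have hsum : ∑ i, pd i (fun y =>
        (n : ℝ) ^ (α - 1) * (Ψ y t) ^ (-α) * pd i (fun z => Ψ z t) y) x
      = D * Real.exp (B1 * s0) * (n + 2 * B1 * s0) := by
    have h6 : ∀ i : Fin n, pd i (fun y =>
        (n : ℝ) ^ (α - 1) * (Ψ y t) ^ (-α) * pd i (fun z => Ψ z t) y) x
        = D * Real.exp (B1 * s0) + (2 * D * Real.exp (B1 * s0) * B1) * (x i) ^ 2 := by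
      intro i
      rw [hflux i, pd_xexp i D B1 x, ← hs0def]
      ring
    rw [Finset.sum_congr rfl fun i _ => h6 i, Finset.sum_add_distrib,
      Finset.sum_const, ← Finset.mul_sum, hnormsum, Finset.card_univ, Fintype.card_fin,
      nsmul_eq_mul]
    ring
  rw [hDt, hsum]
  -- the inequality
  have hEk : Real.exp (B1 * s0) ≤ Real.exp (B * s0) := by
    apply Real.exp_le_exp.2
    rw [hB1def]
    nlinarith [mul_nonneg (mul_nonneg hα0.le hB.le) hs0]
  have hfracpos : 0 ≤ ((n:ℝ) / 2 * cb + B * s0) / τ :=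
    div_nonneg (add_nonneg (by positivity) (mul_nonneg hB.le hs0)) hτ.le
  have hkey : D * (n + 2 * B * s0) ≤ A * (((n:ℝ) / 2 * cb + B * s0) / τ) := by
    have hAsplit : A ^ (1 - α) * A ^ α = A := by
      rw [← Real.rpow_add hApos]; simp
    have hnα : (n : ℝ) ^ (α - 1) * (n : ℝ) ^ 2 = (n : ℝ) ^ (1 + α) := by
      rw [← Real.rpow_natCast (n:ℝ) 2, ← Real.rpow_add hnpos]
      congr 1
      push_cast
      ring
    have hst : 2 * B * (n + 2 * B * s0) ≤ (n : ℝ) ^ 2 * (((n:ℝ) / 2 * cb + B * s0) / τ) := by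
      rw [hBdef]
      have hL : 2 * (ch * (n:ℝ) / (4 * τ)) * (n + 2 * (ch * (n:ℝ) / (4 * τ)) * s0)
          = (2 * ch * (n:ℝ) ^ 2 * τ + ch ^ 2 * (n:ℝ) ^ 2 * s0) / (4 * τ ^ 2) := by
        field_simp
        ring
      have hRt : (n : ℝ) ^ 2 * (((n:ℝ) / 2 * cb + ch * (n:ℝ) / (4 * τ) * s0) / τ)
          = (2 * cb * (n:ℝ) ^ 3 * τ + ch * (n:ℝ) ^ 3 * s0) / (4 * τ ^ 2) := by
        field_simp
        ring
      rw [hL, hRt]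
      have h4τ2 : (0:ℝ) < 4 * τ ^ 2 := by positivity
      have t1 : 2 * ch * (n:ℝ) ^ 2 * τ ≤ 2 * cb * (n:ℝ) ^ 3 * τ := by
        have hc13 : ch * (n:ℝ) ^ 2 ≤ cb * (n:ℝ) ^ 3 := by
          calc ch * (n:ℝ) ^ 2 ≤ cb * (n:ℝ) ^ 2 :=
                mul_le_mul_of_nonneg_right h2.le (by positivity)
            _ = cb * (n:ℝ) ^ 2 * 1 := by ring
            _ ≤ cb * (n:ℝ) ^ 2 * (n:ℝ) :=
                mul_le_mul_of_nonneg_left (by linarith) (by positivity)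
            _ = cb * (n:ℝ) ^ 3 := by ring
        calc 2 * ch * (n:ℝ) ^ 2 * τ = ch * (n:ℝ) ^ 2 * (2 * τ) := by ring
          _ ≤ cb * (n:ℝ) ^ 3 * (2 * τ) := mul_le_mul_of_nonneg_right hc13 (by linarith)
          _ = 2 * cb * (n:ℝ) ^ 3 * τ := by ring
      have t2 : ch ^ 2 * (n:ℝ) ^ 2 * s0 ≤ ch * (n:ℝ) ^ 3 * s0 := by
        have hc23 : ch ^ 2 * (n:ℝ) ^ 2 ≤ ch * (n:ℝ) ^ 3 := by
          calc ch ^ 2 * (n:ℝ) ^ 2 = ch * (n:ℝ) ^ 2 * ch := by ring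
            _ ≤ ch * (n:ℝ) ^ 2 * (n:ℝ) :=
                mul_le_mul_of_nonneg_left (by linarith) (by positivity)
            _ = ch * (n:ℝ) ^ 3 := by ring
        exact mul_le_mul_of_nonneg_right hc23 hs0
      have hnum : 2 * ch * (n:ℝ) ^ 2 * τ + ch ^ 2 * (n:ℝ) ^ 2 * s0
          ≤ 2 * cb * (n:ℝ) ^ 3 * τ + ch * (n:ℝ) ^ 3 * s0 := by linarith
      exact (div_le_div_iff_of_pos_right h4τ2).2 hnum
    have hcore : (n : ℝ) ^ (α - 1) * (2 * B) * (n + 2 * B * s0)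
        ≤ A ^ α * (((n:ℝ) / 2 * cb + B * s0) / τ) := by
      have hc1 : (n : ℝ) ^ (α - 1) * (2 * B) * (n + 2 * B * s0)
          ≤ (n : ℝ) ^ (α - 1) * (n : ℝ) ^ 2 * (((n:ℝ) / 2 * cb + B * s0) / τ) :=
        calc (n : ℝ) ^ (α - 1) * (2 * B) * (n + 2 * B * s0)
            = (n : ℝ) ^ (α - 1) * (2 * B * (n + 2 * B * s0)) := by ring
          _ ≤ (n : ℝ) ^ (α - 1) * ((n : ℝ) ^ 2 * (((n:ℝ) / 2 * cb + B * s0) / τ)) :=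
              mul_le_mul_of_nonneg_left hst (by positivity)
          _ = (n : ℝ) ^ (α - 1) * (n : ℝ) ^ 2 * (((n:ℝ) / 2 * cb + B * s0) / τ) := by ring
      calc (n : ℝ) ^ (α - 1) * (2 * B) * (n + 2 * B * s0)
          ≤ (n : ℝ) ^ (1 + α) * (((n:ℝ) / 2 * cb + B * s0) / τ) := by rw [← hnα]; exact hc1
        _ ≤ A ^ α * (((n:ℝ) / 2 * cb + B * s0) / τ) :=
            mul_le_mul_of_nonneg_right hAα hfracpos
    calc D * (n + 2 * B * s0)
        = A ^ (1 - α) * ((n : ℝ) ^ (α - 1) * (2 * B) * (n + 2 * B * s0)) := by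
          rw [hDdef]; ring
      _ ≤ A ^ (1 - α) * (A ^ α * (((n:ℝ) / 2 * cb + B * s0) / τ)) :=
          mul_le_mul_of_nonneg_left hcore (Real.rpow_nonneg hApos.le _)
      _ = A * (((n:ℝ) / 2 * cb + B * s0) / τ) := by rw [← mul_assoc, hAsplit]
  have h7 : (0:ℝ) ≤ n + 2 * B1 * s0 :=
    add_nonneg hnpos.le (mul_nonneg (mul_nonneg (by norm_num) hB1) hs0)
  have h8 : (n:ℝ) + 2 * B1 * s0 ≤ n + 2 * B * s0 := by
    rw [hB1def]
    nlinarith [mul_nonneg (mul_nonneg hα0.le hB.le) hs0]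
  have hmono : D * Real.exp (B1 * s0) * ((n:ℝ) + 2 * B1 * s0)
      ≤ D * Real.exp (B * s0) * (n + 2 * B * s0) := by
    have hme : Real.exp (B1 * s0) * ((n:ℝ) + 2 * B1 * s0)
        ≤ Real.exp (B * s0) * (n + 2 * B * s0) := mul_le_mul hEk h8 h7 (Real.exp_pos _).le
    calc D * Real.exp (B1 * s0) * ((n:ℝ) + 2 * B1 * s0)
        = D * (Real.exp (B1 * s0) * ((n:ℝ) + 2 * B1 * s0)) := by ring
      _ ≤ D * (Real.exp (B * s0) * ((n:ℝ) + 2 * B * s0)) :=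
          mul_le_mul_of_nonneg_left hme hD.le
      _ = D * Real.exp (B * s0) * ((n:ℝ) + 2 * B * s0) := by ring
  have hfinal : D * Real.exp (B * s0) * ((n:ℝ) + 2 * B * s0)
      ≤ A * Real.exp (B * s0) * (((n:ℝ) / 2 * cb + B * s0) / τ) := by
    have hh := mul_le_mul_of_nonneg_right hkey (Real.exp_pos (B * s0)).le
    calc D * Real.exp (B * s0) * ((n:ℝ) + 2 * B * s0)
        = D * ((n:ℝ) + 2 * B * s0) * Real.exp (B * s0) := by ring
      _ ≤ A * (((n:ℝ) / 2 * cb + B * s0) / τ) * Real.exp (B * s0) := hh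
      _ = A * Real.exp (B * s0) * (((n:ℝ) / 2 * cb + B * s0) / τ) := by ring
  linarith
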